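/- Let 𝒜 = ℂ[E₁,E₂,A₀,A₁] with the derivation f as above and v = A₀ − (1/2)E₁A₁. Then for every odd integer m ≥ 1, the m-th iterate of f annihilates A₁^m·v: f^m(A₁^m v) = 0. -/
import Mathlib

open MvPolynomial Finset

noncomputable section Skein15Aux

namespace Skein15

local notation "R" => MvPolynomial (Fin 4) ℂ

def gψ : Fin 4 → R := ![2*(X 0 + X 1), 4*(X 0 * X 1), X 2, X 3]
def ψ : R →ₐ[ℂ] R := aeval gψ

def Dx : Derivation ℂ R R :=
  mkDerivation ℂ ![2*X 0^2, 0, X 0*X 2 - 4*(X 0*(X 1*X 3)), -(X 0*X 3)]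
def Dy : Derivation ℂ R R :=
  mkDerivation ℂ ![0, 2*X 1^2, X 1*X 2, -(X 1*X 3)]
def Dd : Derivation ℂ R R := Dx + Dy

lemma hDx0 : Dx (X 0) = 2*X 0^2 := by rw [Dx, mkDerivation_X]; rfl
lemma hDx1 : Dx (X 1) = 0 := by rw [Dx, mkDerivation_X]; rfl
lemma hDx2 : Dx (X 2) = X 0*X 2 - 4*(X 0*(X 1*X 3)) := by rw [Dx, mkDerivation_X]; rfl
lemma hDx3 : Dx (X 3) = -(X 0*X 3) := by rw [Dx, mkDerivation_X]; rfl
lemma hDy0 : Dy (X 0) = 0 := by rw [Dy, mkDerivation_X]; rfl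
lemma hDy1 : Dy (X 1) = 2*X 1^2 := by rw [Dy, mkDerivation_X]; rfl
lemma hDy2 : Dy (X 2) = X 1*X 2 := by rw [Dy, mkDerivation_X]; rfl
lemma hDy3 : Dy (X 3) = -(X 1*X 3) := by rw [Dy, mkDerivation_X]; rfl

lemma D_ofNat (D : Derivation ℂ R R) (n : ℕ) [n.AtLeastTwo] :
    D (OfNat.ofNat n : R) = 0 := by
  rw [← map_ofNat (algebraMap ℂ R) n]
  exact Derivation.map_algebraMap D _

lemma hxy : ∀ p : R, Dx (Dy p) = Dy (Dx p) := by
  have d2x : Dx (2:R) = 0 := D_ofNat Dx 2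
  have d4x : Dx (4:R) = 0 := D_ofNat Dx 4
  have d2y : Dy (2:R) = 0 := D_ofNat Dy 2
  have d4y : Dy (4:R) = 0 := D_ofNat Dy 4
  have h : (⁅Dx, Dy⁆ : Derivation ℂ R R) = 0 := by
    apply derivation_ext
    intro i
    fin_cases i <;>
      simp [Derivation.commutator_apply, Derivation.leibniz, smul_eq_mul, hDx0, hDx1, hDx2,
        hDx3, hDy0, hDy1, hDy2, hDy3, d2x, d4x, d2y, d4y, Derivation.leibniz_pow] <;> ring
  intro p
  have h2 : (⁅Dx, Dy⁆ : Derivation ℂ R R) p = 0 := by rw [h]; simp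
  rw [Derivation.commutator_apply] at h2
  exact sub_eq_zero.mp h2


lemma hDxmul1 (p : R) : Dx (X 1 * p) = X 1 * Dx p := by
  rw [Derivation.leibniz, hDx1]; simp [smul_eq_mul]

lemma hDymul0 (p : R) : Dy (X 0 * p) = X 0 * Dy p := by
  rw [Derivation.leibniz, hDy0]; simp [smul_eq_mul]

def Am (k : ℕ) : Module.End ℂ R :=
  Dx.toLinearMap - ((2*k : ℕ) : ℂ) • LinearMap.mulLeft ℂ (X 0)
def Bm (k : ℕ) : Module.End ℂ R :=
  Dy.toLinearMap - ((2*k : ℕ) : ℂ) • LinearMap.mulLeft ℂ (X 1)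

lemma Am_apply (k : ℕ) (p : R) :
    Am k p = Dx p - ((2*k : ℕ) : ℂ) • (X 0 * p) := by
  simp [Am]

lemma Bm_apply (k : ℕ) (p : R) :
    Bm k p = Dy p - ((2*k : ℕ) : ℂ) • (X 1 * p) := by
  simp [Bm]

lemma hcomm (k : ℕ) : Commute (Am k) (Bm k) := by
  apply LinearMap.ext
  intro p
  simp only [Module.End.mul_apply, Am_apply, Bm_apply, map_sub, map_smul, hDxmul1, hDymul0,
    hxy p, mul_sub, smul_sub, smul_smul]
  have h1 : X 0 * (X 1 * p) = X 1 * (X 0 * p) := by ring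
  rw [h1]
  ring_nf


lemma hDxpow (i : ℕ) : Dx (X 0 ^ i) = ((2*i : ℕ) : ℂ) • X 0 ^ (i+1) := by
  cases i with
  | zero => simp
  | succ n =>
    rw [Derivation.leibniz_pow, hDx0, Nat.succ_sub_one]
    rw [smul_eq_C_mul, map_natCast]
    simp only [nsmul_eq_mul, smul_eq_mul]
    push_cast
    ring

lemma hDypow (l : ℕ) : Dy (X 1 ^ l) = ((2*l : ℕ) : ℂ) • X 1 ^ (l+1) := by
  cases l with
  | zero => simp
  | succ n =>
    rw [Derivation.leibniz_pow, hDy1, Nat.succ_sub_one]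
    rw [smul_eq_C_mul, map_natCast]
    simp only [nsmul_eq_mul, smul_eq_mul]
    push_cast
    ring

lemma hDxpow1 (l : ℕ) : Dx (X 1 ^ l) = 0 := by
  rw [Derivation.leibniz_pow, hDx1]; simp

lemma hDypow0 (i : ℕ) : Dy (X 0 ^ i) = 0 := by
  rw [Derivation.leibniz_pow, hDy0]; simp

lemma hAmon (k i l : ℕ) :
    Am k (X 0 ^ i * X 1 ^ l) = (2*(i:ℂ) - 2*(k:ℂ)) • (X 0 ^ (i+1) * X 1 ^ l) := by
  rw [Am_apply, Derivation.leibniz, hDxpow, hDxpow1]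
  simp only [smul_eq_mul, mul_zero, zero_add, smul_eq_C_mul, map_natCast, map_sub, map_mul,
    map_ofNat]
  push_cast
  ring

lemma hBmon (k l : ℕ) :
    Bm k (X 1 ^ l) = (2*(l:ℂ) - 2*(k:ℂ)) • X 1 ^ (l+1) := by
  rw [Bm_apply, hDypow]
  simp only [smul_eq_C_mul, map_natCast, map_sub, map_mul, map_ofNat]
  push_cast
  ring

/-- coefficient products -/
def cprod (k j i : ℕ) : ℂ := ∏ t ∈ range j, (2*((i+t : ℕ):ℂ) - 2*(k:ℂ))

lemma hApowmon (k : ℕ) : ∀ j i l : ℕ,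
    (Am k ^ j) (X 0 ^ i * X 1 ^ l) = cprod k j i • (X 0 ^ (i+j) * X 1 ^ l) := by
  intro j
  induction j with
  | zero => intro i l; simp [cprod]
  | succ j ih =>
    intro i l
    rw [pow_succ, Module.End.mul_apply, hAmon, map_smul, ih (i+1) l, smul_smul]
    have h1 : (2*(i:ℂ) - 2*(k:ℂ)) * cprod k j (i+1) = cprod k (j+1) i := by
      rw [cprod, cprod, Finset.prod_range_succ']
      have h2 : ∀ t ∈ range j, (2*(((i+1)+t : ℕ):ℂ) - 2*(k:ℂ))
          = (2*((i+(t+1) : ℕ):ℂ) - 2*(k:ℂ)) := by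
        intro t _
        rw [show (i+1)+t = i+(t+1) from by omega]
      rw [Finset.prod_congr rfl h2]
      push_cast
      ring
    rw [h1, show i+1+j = i+(j+1) from by omega]

lemma hBpow (k : ℕ) : ∀ j : ℕ, (Bm k ^ j) (1 : R) = cprod k j 0 • X 1 ^ j := by
  intro j
  induction j with
  | zero => simp [cprod]
  | succ j ih =>
    rw [pow_succ', Module.End.mul_apply, ih, map_smul, hBmon, smul_smul]
    rw [cprod, cprod, Finset.prod_range_succ]
    simp [Nat.zero_add]

lemma cprod_zero (k j i : ℕ) (h1 : i ≤ k) (h2 : k < i + j) : cprod k j i = 0 := by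
  apply Finset.prod_eq_zero (i := k - i) (Finset.mem_range.mpr (by omega))
  rw [show i + (k-i) = k from by omega]
  ring

lemma hABzero (k : ℕ) : ((Am k + Bm k) ^ (2*k+1)) (1 : R) = 0 := by
  rw [(hcomm k).add_pow, LinearMap.sum_apply]
  apply Finset.sum_eq_zero
  intro j hj
  rw [Finset.mem_range] at hj
  rw [Module.End.mul_apply, Module.End.mul_apply, Module.End.natCast_apply, map_nsmul, map_nsmul,
    hBpow, map_smul, show (X 1 ^ (2*k+1-j) : R) = X 0 ^ 0 * X 1 ^ (2*k+1-j) from by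
      rw [pow_zero, one_mul],
    hApowmon, smul_smul]
  rcases le_or_gt j k with h | h
  · rw [cprod_zero k (2*k+1-j) 0 (by omega) (by omega)]
    simp
  · rw [cprod_zero k j 0 (by omega) (by omega)]
    simp


lemma hDdsplit (p : R) : Dd p = Dx p + Dy p := rfl

lemma hDd0 : Dd (X 0) = 2*X 0^2 := by rw [hDdsplit, hDx0, hDy0, add_zero]
lemma hDd1 : Dd (X 1) = 2*X 1^2 := by rw [hDdsplit, hDx1, hDy1, zero_add]
lemma hDd2 : Dd (X 2) = X 0*X 2 - 4*(X 0*(X 1*X 3)) + X 1*X 2 := by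
  rw [hDdsplit, hDx2, hDy2]
lemma hDd3 : Dd (X 3) = -(X 0*X 3) + -(X 1*X 3) := by rw [hDdsplit, hDx3, hDy3]

def Wk (k : ℕ) : R := X 3 ^ (2*k+1) * (X 2 - (X 0 + X 1) * X 3)

lemma hDW (k : ℕ) :
    Dd (Wk k) = (-(2*(k:ℂ))) • ((X 0 + X 1) * Wk k) := by
  rw [Wk]
  simp only [Derivation.leibniz, Derivation.leibniz_pow, map_sub, map_add, hDd0, hDd1, hDd2,
    hDd3, Nat.add_sub_cancel, smul_eq_mul, nsmul_eq_mul, smul_eq_C_mul, map_neg, map_mul,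
    map_ofNat, map_natCast]
  push_cast
  ring

lemma hDlin (D : Derivation ℂ R R) (p : R) : D.toLinearMap p = D p := rfl

lemma hDpow (k : ℕ) : ∀ r : ℕ,
    (Dd.toLinearMap ^ r) (Wk k) = (((Am k + Bm k) ^ r) (1 : R)) * Wk k := by
  intro r
  induction r with
  | zero => simp
  | succ r ih =>
    rw [pow_succ', Module.End.mul_apply, ih, hDlin, Derivation.leibniz, hDW k]
    rw [pow_succ', Module.End.mul_apply, LinearMap.add_apply, Am_apply, Bm_apply]
    simp only [smul_eq_mul, smul_eq_C_mul, map_neg, map_mul, map_ofNat, map_natCast, hDdsplit]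
    push_cast
    ring

lemma hpsi0 : ψ (X 0) = 2*(X 0 + X 1) := by simp [ψ, gψ]
lemma hpsi1 : ψ (X 1) = 4*(X 0 * X 1) := by simp [ψ, gψ]
lemma hpsi2 : ψ (X 2) = X 2 := by simp [ψ, gψ]
lemma hpsi3 : ψ (X 3) = X 3 := by simp [ψ, gψ]

lemma hhalf (p : R) : (1/2 : ℂ) • (2 * p) = p := by
  rw [smul_eq_C_mul, show ((2:R)) = C (2:ℂ) from (map_ofNat C 2).symm, ← mul_assoc, ← map_mul]
  norm_num

lemma hgen (f : Derivation ℂ R R)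
    (hf1 : f (X 0) = X 0 ^ 2 - 2 * X 1) (hf2 : f (X 1) = X 0 * X 1)
    (hf3 : f (X 2) = (1 / 2 : ℂ) • (X 0 * X 2) - X 1 * X 3)
    (hf4 : f (X 3) = -((1 / 2 : ℂ) • (X 0 * X 3))) :
    ∀ n : Fin 4, ψ (f (X n)) = Dd (ψ (X n)) := by
  have d2 : Dd (2:R) = 0 := D_ofNat Dd 2
  have d4 : Dd (4:R) = 0 := D_ofNat Dd 4
  intro n
  fin_cases n
  · show ψ (f (X 0)) = Dd (ψ (X 0))
    rw [hf1, hpsi0]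
    rw [map_sub, map_pow, map_mul, hpsi0, hpsi1]
    simp only [Derivation.leibniz, map_add, hDd0, hDd1, d2, d4, smul_eq_mul, map_ofNat]
    ring
  · show ψ (f (X 1)) = Dd (ψ (X 1))
    rw [hf2, hpsi1]
    rw [map_mul, hpsi0, hpsi1]
    simp only [Derivation.leibniz, map_add, hDd0, hDd1, d2, d4, smul_eq_mul, map_ofNat]
    ring
  · show ψ (f (X 2)) = Dd (ψ (X 2))
    rw [hf3, hpsi2]
    rw [map_sub, map_smul, map_mul, map_mul, hpsi0, hpsi1, hpsi2, hpsi3, hDd2]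
    rw [mul_assoc (2:R), hhalf]
    ring
  · show ψ (f (X 3)) = Dd (ψ (X 3))
    rw [hf4, hpsi3]
    rw [map_neg, map_smul, map_mul, hpsi0, hpsi3, hDd3]
    rw [mul_assoc (2:R), hhalf]
    ring

lemma hpsiD (f : Derivation ℂ R R)
    (hf1 : f (X 0) = X 0 ^ 2 - 2 * X 1) (hf2 : f (X 1) = X 0 * X 1)
    (hf3 : f (X 2) = (1 / 2 : ℂ) • (X 0 * X 2) - X 1 * X 3)
    (hf4 : f (X 3) = -((1 / 2 : ℂ) • (X 0 * X 3))) :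
    ∀ p : R, ψ (f p) = Dd (ψ p) := by
  intro p
  induction p using MvPolynomial.induction_on with
  | C a =>
    rw [show (C a : R) = algebraMap ℂ R a from rfl, Derivation.map_algebraMap, map_zero,
      AlgHom.commutes, Derivation.map_algebraMap]
  | add p q hp hq => rw [map_add, map_add, map_add, hp, hq, map_add]
  | mul_X p n hp =>
    rw [Derivation.leibniz, smul_eq_mul, smul_eq_mul, map_add, map_mul, map_mul, hp,
      hgen f hf1 hf2 hf3 hf4 n, map_mul, Derivation.leibniz, smul_eq_mul, smul_eq_mul]

lemma hpowpsi (f : Derivation ℂ R R)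
    (hcompat : ∀ p : R, ψ (f p) = Dd (ψ p)) :
    ∀ (n : ℕ) (p : R), ψ ((f.toLinearMap ^ n) p) = (Dd.toLinearMap ^ n) (ψ p) := by
  intro n
  induction n with
  | zero => intro p; simp
  | succ n ih =>
    intro p
    rw [pow_succ, Module.End.mul_apply, pow_succ, Module.End.mul_apply, hDlin, hDlin, ih,
      hcompat]

lemma haeval_eval (u : Fin 4 → ℂ) (r : R) : aeval u r = eval u r := by
  rw [← coe_aeval_eq_eval]
  rfl

lemma hinj : Function.Injective ψ := by
  intro p q hpq
  apply MvPolynomial.funext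
  intro u
  obtain ⟨s, hs⟩ := IsAlgClosed.exists_pow_nat_eq ((u 0)^2 - 4 * u 1) (n := 2) (by norm_num)
  set pt : Fin 4 → ℂ := ![(u 0 + s)/4, (u 0 - s)/4, u 2, u 3] with hpt
  have key : ∀ r : R, eval u r = aeval pt (ψ r) := by
    intro r
    have h1 : (aeval pt : R →ₐ[ℂ] ℂ).comp (aeval gψ) = aeval (fun i => aeval pt (gψ i)) :=
      comp_aeval gψ (aeval pt)
    have h2 : (fun i => aeval pt (gψ i)) = u := by
      funext i
      fin_cases i
      · show aeval pt (gψ 0) = u 0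
        simp [gψ, hpt]
        ring
      · show aeval pt (gψ 1) = u 1
        simp [gψ, hpt]
        linear_combination (-1/4 : ℂ) * hs
      · show aeval pt (gψ 2) = u 2
        simp [gψ, hpt]
      · show aeval pt (gψ 3) = u 3
        simp [gψ, hpt]
    have h3 : ψ r = aeval gψ r := rfl
    rw [h3, ← AlgHom.comp_apply, h1, h2, haeval_eval]
  rw [key p, key q, hpq]

end Skein15

end Skein15Aux

/-- In `𝒜 = ℂ[E₁,E₂,A₀,A₁]` with the derivation `f` as in the skein
lasagna module of `B² × S²` and `v = A₀ - (1/2)E₁A₁`, for every odd `m ≥ 1` one has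
`f^m(A₁^m v) = 0`. Here `E₁ = X 0`, `E₂ = X 1`, `A₀ = X 2`, `A₁ = X 3`. -/
theorem f_iterate_kills_A1m_v
    (f : Derivation ℂ (MvPolynomial (Fin 4) ℂ) (MvPolynomial (Fin 4) ℂ))
    (hf1 : f (X 0) = X 0 ^ 2 - 2 * X 1) (hf2 : f (X 1) = X 0 * X 1)
    (hf3 : f (X 2) = (1 / 2 : ℂ) • (X 0 * X 2) - X 1 * X 3)
    (hf4 : f (X 3) = -((1 / 2 : ℂ) • (X 0 * X 3)))
    (v : MvPolynomial (Fin 4) ℂ) (hv : v = X 2 - (1 / 2 : ℂ) • (X 0 * X 3))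
    (m : ℕ) (hm1 : 1 ≤ m) (hm : Odd m) :
    (f.toLinearMap ^ m) (X 3 ^ m * v) = 0 := by
  obtain ⟨k, hk⟩ := hm
  have hk' : m = 2*k+1 := by omega
  subst hk'
  apply Skein15.hinj
  rw [map_zero, Skein15.hpowpsi f (Skein15.hpsiD f hf1 hf2 hf3 hf4)]
  have hw : Skein15.ψ (X 3 ^ (2*k+1) * v) = Skein15.Wk k := by
    rw [hv, map_mul, map_pow, Skein15.hpsi3, map_sub, map_smul, map_mul, Skein15.hpsi0,
      Skein15.hpsi3, Skein15.Wk, mul_assoc (2:MvPolynomial (Fin 4) ℂ), Skein15.hhalf,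
      Skein15.hpsi2]
  rw [hw, Skein15.hDpow k, Skein15.hABzero k, zero_mul]
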